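/- Suppose ρ ∉ 𝒫. Let X be the workload process under the MaxWeight policy with weight matrix D, and let X̄ be the workload process under an arbitrary other scheduling policy (a sequence S̄(t) ∈ 𝒮 with the same arrivals A). Suppose both limits η := lim_{t→∞} X(t)/t and η̄ := lim_{t→∞} X̄(t)/t exist, Σ_k η_k > 0, Σ_k η̄_k > 0, and both achieve the same fairness criterion: η_q/(Σ_k η_k) = η̄_q/(Σ_k η̄_k) = θ_q for every q. Then η ≤ η̄ componentwise. -/

import Mathlib

open Finset Filter Topology


private lemma wcesaro {b : ℕ → ℝ} {L : ℝ} (hb : Tendsto b atTop (𝓝 L)) :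
    Tendsto (fun t : ℕ => (∑ s ∈ Finset.range t, (s : ℝ) * b s) / (t : ℝ) ^ 2)
      atTop (𝓝 (L / 2)) := by
  have habs : Tendsto (fun s : ℕ => |b s - L|) atTop (𝓝 0) := by
    have := (hb.sub_const L).abs
    simpa using this
  have hces : Tendsto (fun t : ℕ => ((t : ℝ))⁻¹ * ∑ s ∈ Finset.range t, |b s - L|)
      atTop (𝓝 0) := by simpa using habs.cesaro
  have h1 : Tendsto (fun t : ℕ => (∑ s ∈ Finset.range t, (s : ℝ) * (b s - L)) / (t : ℝ) ^ 2)
      atTop (𝓝 0) := by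
    apply squeeze_zero_norm _ hces
    intro t
    rcases Nat.eq_zero_or_pos t with rfl | ht
    · simp
    have htR : (0:ℝ) < t := by exact_mod_cast ht
    rw [Real.norm_eq_abs, abs_div, abs_of_nonneg (by positivity : (0:ℝ) ≤ (t:ℝ)^2), div_le_iff₀ (by positivity)]
    calc |∑ s ∈ Finset.range t, (s : ℝ) * (b s - L)|
        ≤ ∑ s ∈ Finset.range t, |(s : ℝ) * (b s - L)| := Finset.abs_sum_le_sum_abs _ _
      _ ≤ ∑ s ∈ Finset.range t, (t : ℝ) * |b s - L| := by
          apply Finset.sum_le_sum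
          intro s hs
          rw [abs_mul, abs_of_nonneg (by positivity : (0:ℝ) ≤ (s:ℝ))]
          have hst : (s:ℝ) ≤ t := by exact_mod_cast (Finset.mem_range.1 hs).le
          exact mul_le_mul_of_nonneg_right hst (abs_nonneg _)
      _ = (t:ℝ) * ∑ s ∈ Finset.range t, |b s - L| := by rw [Finset.mul_sum]
      _ = (↑t)⁻¹ * (∑ s ∈ Finset.range t, |b s - L|) * (t:ℝ)^2 := by
          field_simp
  have h2 : Tendsto (fun t : ℕ => (∑ s ∈ Finset.range t, (s : ℝ)) / (t : ℝ) ^ 2)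
      atTop (𝓝 (1 / 2)) := by
    have key : ∀ t : ℕ, (∑ s ∈ Finset.range t, (s : ℝ)) = (t : ℝ) * ((t:ℝ) - 1) / 2 := by
      intro t
      induction t with
      | zero => simp
      | succ n ih => rw [Finset.sum_range_succ, ih]; push_cast; ring
    have hinv : Tendsto (fun t : ℕ => (1 - (t:ℝ)⁻¹) / 2) atTop (𝓝 (1/2)) := by
      have h0 : Tendsto (fun t : ℕ => (t:ℝ)⁻¹) atTop (𝓝 0) :=
        tendsto_inv_atTop_nhds_zero_nat
      have := ((tendsto_const_nhds (x := (1:ℝ))).sub h0).div_const 2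
      simpa using this
    apply hinv.congr'
    filter_upwards [eventually_gt_atTop 0] with t ht
    have htR : (0:ℝ) < t := by exact_mod_cast ht
    rw [key t]
    field_simp
  have hcomb := h1.add (h2.const_mul L)
  have : Tendsto (fun t : ℕ => (∑ s ∈ Finset.range t, (s : ℝ) * (b s - L)) / (t : ℝ) ^ 2
      + L * ((∑ s ∈ Finset.range t, (s : ℝ)) / (t : ℝ) ^ 2)) atTop (𝓝 (L/2)) := by
    simpa [div_eq_mul_inv] using hcomb
  apply this.congr
  intro t
  rw [mul_div_assoc', ← add_div]
  congr 1
  rw [Finset.mul_sum, ← Finset.sum_add_distrib]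
  exact Finset.sum_congr rfl fun s _ => by ring

private lemma abel_id (Y : ℕ → ℝ) (hY0 : Y 0 = 0) :
    ∀ t : ℕ, ∑ s ∈ Finset.range t, (s : ℝ) * (Y (s+1) - Y s)
      = ((t : ℝ) - 1) * Y t - ∑ s ∈ Finset.range t, Y s := by
  intro t
  induction t with
  | zero => simp [hY0]
  | succ n ih =>
    rw [Finset.sum_range_succ, ih, Finset.sum_range_succ]
    push_cast; ring

private lemma coordLimit {X Xb : ℕ → ℝ} {η ηb : ℝ} (hX0 : X 0 = 0) (hXb0 : Xb 0 = 0)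
    (M : ℝ) (hM : ∀ s : ℕ, |(X (s+1) - Xb (s+1)) - (X s - Xb s)| ≤ M)
    (hX : Tendsto (fun t : ℕ => X t / (t:ℝ)) atTop (𝓝 η))
    (hXb : Tendsto (fun t : ℕ => Xb t / (t:ℝ)) atTop (𝓝 ηb)) :
    Tendsto (fun t : ℕ =>
      (∑ s ∈ Finset.range t, ((X (s+1) - Xb (s+1)) - (X s - Xb s)) * X s) / (t:ℝ)^2)
      atTop (𝓝 (η * (η - ηb) / 2)) := by
  set Y : ℕ → ℝ := fun s => X s - Xb s with hYdef
  have hY0 : Y 0 = 0 := by simp [hYdef, hX0, hXb0]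
  have hYlim : Tendsto (fun t : ℕ => Y t / (t:ℝ)) atTop (𝓝 (η - ηb)) :=
    (hX.sub hXb).congr fun t => (sub_div _ _ _).symm
  -- sum of Y over t^2
  have hsumY : Tendsto (fun t : ℕ => (∑ s ∈ Finset.range t, Y s) / (t:ℝ)^2)
      atTop (𝓝 ((η - ηb)/2)) := by
    have h := wcesaro hYlim
    apply h.congr
    intro t
    congr 1
    apply Finset.sum_congr rfl
    intro s _
    rcases Nat.eq_zero_or_pos s with rfl | hs
    · simp [hY0]
    · have : (s:ℝ) ≠ 0 := by positivity
      field_simp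
  -- ((t-1) Y t)/t^2 → η - ηb
  have hfrac : Tendsto (fun t : ℕ => (((t:ℝ) - 1) * Y t) / (t:ℝ)^2) atTop (𝓝 (η - ηb)) := by
    have h1t : Tendsto (fun t : ℕ => ((t:ℝ)-1)/(t:ℝ)) atTop (𝓝 1) := by
      have h0 : Tendsto (fun t : ℕ => (t:ℝ)⁻¹) atTop (𝓝 0) :=
        tendsto_inv_atTop_nhds_zero_nat
      have := (tendsto_const_nhds (x := (1:ℝ))).sub h0
      rw [sub_zero] at this
      apply this.congr'
      filter_upwards [eventually_gt_atTop 0] with t ht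
      have : (t:ℝ) ≠ 0 := by positivity
      field_simp
    have := h1t.mul hYlim
    rw [one_mul] at this
    apply this.congr'
    filter_upwards [eventually_gt_atTop 0] with t ht
    rw [div_mul_div_comm, ← sq]
  have hterm1 : Tendsto (fun t : ℕ =>
      (∑ s ∈ Finset.range t, (s:ℝ) * (Y (s+1) - Y s)) / (t:ℝ)^2)
      atTop (𝓝 ((η - ηb)/2)) := by
    have h := hfrac.sub hsumY
    have hv : (η - ηb) - (η - ηb)/2 = (η - ηb)/2 := by ring
    rw [hv] at h
    apply h.congr
    intro t
    rw [← sub_div, ← abel_id Y hY0 t]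
  -- error term
  have herr : Tendsto (fun t : ℕ =>
      (∑ s ∈ Finset.range t, ((Y (s+1) - Y s) * (X s - (s:ℝ)*η))) / (t:ℝ)^2)
      atTop (𝓝 0) := by
    set e : ℕ → ℝ := fun s => |X s - (s:ℝ)*η| / (s:ℝ) with hedef
    have he : Tendsto e atTop (𝓝 0) := by
      have h0 : Tendsto (fun s : ℕ => |X s/(s:ℝ) - η|) atTop (𝓝 0) := by
        have := (hX.sub_const η).abs
        simpa using this
      apply h0.congr'
      filter_upwards [eventually_gt_atTop 0] with s hs
      have hsR : (0:ℝ) < s := by exact_mod_cast hs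
      simp only [hedef]
      have hx : X s / (s:ℝ) - η = (X s - (s:ℝ)*η)/(s:ℝ) := by field_simp
      rw [hx, abs_div, abs_of_pos hsR]
    have hXe : ∀ s : ℕ, |X s - (s:ℝ)*η| = (s:ℝ) * e s := by
      intro s
      rcases Nat.eq_zero_or_pos s with rfl | hs
      · simp [hedef, hX0]
      · have hsR : (0:ℝ) < s := by exact_mod_cast hs
        simp only [hedef]
        field_simp
    have hMnn : 0 ≤ M := le_trans (abs_nonneg _) (hM 0)
    have hb2 := wcesaro he
    rw [zero_div] at hb2
    have hMul : Tendsto (fun t : ℕ =>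
        M * ((∑ s ∈ Finset.range t, (s:ℝ) * e s)/(t:ℝ)^2)) atTop (𝓝 0) := by
      have := hb2.const_mul M
      simpa using this
    apply squeeze_zero_norm _ hMul
    intro t
    rw [Real.norm_eq_abs, abs_div, abs_of_nonneg (by positivity : (0:ℝ) ≤ (t:ℝ)^2),
      mul_div_assoc']
    have hnum : |∑ s ∈ Finset.range t, (Y (s+1) - Y s) * (X s - (s:ℝ)*η)|
        ≤ M * ∑ s ∈ Finset.range t, (s:ℝ) * e s := by
      calc |∑ s ∈ Finset.range t, (Y (s+1) - Y s) * (X s - (s:ℝ)*η)|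
          ≤ ∑ s ∈ Finset.range t, |(Y (s+1) - Y s) * (X s - (s:ℝ)*η)| :=
            Finset.abs_sum_le_sum_abs _ _
        _ ≤ ∑ s ∈ Finset.range t, M * ((s:ℝ) * e s) := by
            apply Finset.sum_le_sum
            intro s _
            rw [abs_mul, hXe s]
            exact mul_le_mul_of_nonneg_right (hM s) (abs_nonneg _ |>.trans (le_of_eq (hXe s)))
        _ = M * ∑ s ∈ Finset.range t, (s:ℝ) * e s := by rw [Finset.mul_sum]
    rcases Nat.eq_zero_or_pos t with rfl | ht
    · simp
    · have htR : (0:ℝ) < (t:ℝ)^2 := by positivity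
      gcongr
  -- combine
  have hcomb := (hterm1.const_mul η).add herr
  rw [add_zero] at hcomb
  have hv : η * ((η - ηb)/2) = η * (η - ηb) / 2 := by ring
  rw [hv] at hcomb
  apply hcomb.congr
  intro t
  rw [mul_div_assoc', ← add_div]
  congr 1
  rw [Finset.mul_sum, ← Finset.sum_add_distrib]
  apply Finset.sum_congr rfl
  intro s _
  simp only [hYdef]
  ring


/-- The stability region: loads dominated by a convex combination of service vectors. -/
def stabRegion {Q N : ℕ} (S : Fin N → Fin Q → ℝ) : Set (Fin Q → ℝ) :=
  {r | (∀ q, 0 ≤ r q) ∧ ∃ α : Fin N → ℝ, (∀ i, 0 ≤ α i) ∧ (∑ i, α i) = 1 ∧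
    ∀ q, r q ≤ ∑ i, α i * S i q}

set_option maxHeartbeats 1600000 in
/-- among all policies achieving the fairness criterion θ, MaxWeight achieves
the componentwise minimal growth vector: η ≤ η̄. -/
theorem stmt17 {Q N : ℕ} (hQ : 0 < Q) (hN : 0 < N)
    (A : ℕ → Fin Q → ℝ) (Abar : Fin Q → ℝ)
    (hA0 : ∀ t q, 0 ≤ A t q) (hAbar : ∀ t q, A t q ≤ Abar q)
    (ρ : Fin Q → ℝ) (hρpos : ∀ q, 0 < ρ q)
    (hρ : ∀ q, Tendsto (fun t : ℕ => (∑ s ∈ Finset.range t, A s q) / (t : ℝ))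
      atTop (𝓝 (ρ q)))
    (S : Fin N → Fin Q → ℝ) (hS : ∀ i q, 0 ≤ S i q)
    (hover : ρ ∉ stabRegion S)
    (d : Fin Q → ℝ) (hd : ∀ q, 0 < d q)
    -- MaxWeight trajectory X with policy σ
    (σ : ℕ → Fin N)
    (X : ℕ → Fin Q → ℝ) (hX0 : ∀ q, X 0 q = 0)
    (hXrec : ∀ t q, X (t + 1) q = X t q + A t q - min (S (σ t) q) (X t q))
    (hMW : ∀ t j, ∑ q, S j q * (d q * X t q) ≤ ∑ q, S (σ t) q * (d q * X t q))
    -- alternative trajectory X̄ with arbitrary policy σ̄, same arrivals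
    (σb : ℕ → Fin N)
    (Xb : ℕ → Fin Q → ℝ) (hXb0 : ∀ q, Xb 0 q = 0)
    (hXbrec : ∀ t q, Xb (t + 1) q = Xb t q + A t q - min (S (σb t) q) (Xb t q))
    (η ηb : Fin Q → ℝ)
    (hηlim : Tendsto (fun t : ℕ => fun q => X t q / (t : ℝ)) atTop (𝓝 η))
    (hηblim : Tendsto (fun t : ℕ => fun q => Xb t q / (t : ℝ)) atTop (𝓝 ηb))
    (hsum : 0 < ∑ k, η k) (hsumb : 0 < ∑ k, ηb k)
    (θ : Fin Q → ℝ)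
    (hfair : ∀ q, η q / (∑ k, η k) = θ q)
    (hfairb : ∀ q, ηb q / (∑ k, ηb k) = θ q) :
    ∀ q, η q ≤ ηb q := by
  -- coordinatewise limits
  have hXq : ∀ q, Tendsto (fun t : ℕ => X t q / (t:ℝ)) atTop (𝓝 (η q)) :=
    fun q => tendsto_pi_nhds.1 hηlim q
  have hXbq : ∀ q, Tendsto (fun t : ℕ => Xb t q / (t:ℝ)) atTop (𝓝 (ηb q)) :=
    fun q => tendsto_pi_nhds.1 hηblim q
  -- nonnegativity of workloads
  have hXnn : ∀ t q, 0 ≤ X t q := by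
    intro t
    induction t with
    | zero => intro q; exact (hX0 q).ge
    | succ n ih =>
      intro q
      rw [hXrec n q]
      have h1 := min_le_right (S (σ n) q) (X n q)
      have h2 := hA0 n q
      linarith [ih q]
  have hXbnn : ∀ t q, 0 ≤ Xb t q := by
    intro t
    induction t with
    | zero => intro q; exact (hXb0 q).ge
    | succ n ih =>
      intro q
      rw [hXbrec n q]
      have h1 := min_le_right (S (σb n) q) (Xb n q)
      have h2 := hA0 n q
      linarith [ih q]
  have hηnn : ∀ q, 0 ≤ η q := fun q =>
    ge_of_tendsto' (hXq q) fun t => div_nonneg (hXnn t q) (Nat.cast_nonneg t)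
  -- bound on service vectors
  set B : Fin Q → ℝ := fun q => ∑ i, S i q with hBdef
  have hSB : ∀ j q, S j q ≤ B q := fun j q =>
    Finset.single_le_sum (fun i _ => hS i q) (Finset.mem_univ j)
  -- the increment of X - Xb
  set a : ℕ → Fin Q → ℝ :=
    fun s q => (X (s+1) q - Xb (s+1) q) - (X s q - Xb s q) with hadef
  have haeq : ∀ s q, a s q = min (S (σb s) q) (Xb s q) - min (S (σ s) q) (X s q) := by
    intro s q
    simp only [hadef]
    rw [hXrec s q, hXbrec s q]
    ring
  have haM : ∀ s q, |a s q| ≤ B q := by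
    intro s q
    rw [haeq]
    have h1 : 0 ≤ min (S (σb s) q) (Xb s q) := le_min (hS _ _) (hXbnn s q)
    have h2 : min (S (σb s) q) (Xb s q) ≤ B q := (min_le_left _ _).trans (hSB _ _)
    have h3 : 0 ≤ min (S (σ s) q) (X s q) := le_min (hS _ _) (hXnn s q)
    have h4 : min (S (σ s) q) (X s q) ≤ B q := (min_le_left _ _).trans (hSB _ _)
    rw [abs_le]
    constructor <;> linarith
  set C : ℝ := ∑ q, d q * (B q)^2 with hCdef
  -- per-slot MaxWeight inequality
  have hslot : ∀ s, ∑ q, d q * (a s q * X s q) ≤ C := by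
    intro s
    have e1 : ∑ q, d q * (a s q * X s q)
        = ∑ q, d q * (min (S (σb s) q) (Xb s q) * X s q)
          - ∑ q, d q * (min (S (σ s) q) (X s q) * X s q) := by
      rw [← Finset.sum_sub_distrib]
      apply Finset.sum_congr rfl
      intro q _
      rw [haeq s q]
      ring
    have h1 : ∑ q, d q * (min (S (σb s) q) (Xb s q) * X s q)
        ≤ ∑ q, S (σb s) q * (d q * X s q) := by
      apply Finset.sum_le_sum
      intro q _
      have hdx : 0 ≤ d q * X s q := mul_nonneg (hd q).le (hXnn s q)
      calc d q * (min (S (σb s) q) (Xb s q) * X s q)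
          = min (S (σb s) q) (Xb s q) * (d q * X s q) := by ring
        _ ≤ S (σb s) q * (d q * X s q) :=
            mul_le_mul_of_nonneg_right (min_le_left _ _) hdx
    have h2 := hMW s (σb s)
    have h3 : ∑ q, S (σ s) q * (d q * X s q)
        ≤ ∑ q, (d q * (min (S (σ s) q) (X s q) * X s q) + d q * (B q)^2) := by
      apply Finset.sum_le_sum
      intro q _
      have hx := hXnn s q
      have hs0 := hS (σ s) q
      have hsB := hSB (σ s) q
      have hkey : X s q * (S (σ s) q - min (S (σ s) q) (X s q)) ≤ (B q)^2 := by
        rcases le_total (X s q) (S (σ s) q) with h | h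
        · rw [min_eq_right h]; nlinarith
        · rw [min_eq_left h]; nlinarith
      have hdq := (hd q).le
      nlinarith [mul_le_mul_of_nonneg_left hkey hdq]
    rw [Finset.sum_add_distrib] at h3
    rw [e1, hCdef]
    linarith
  -- sum over time
  set F : Fin Q → ℕ → ℝ := fun q t => ∑ s ∈ Finset.range t, a s q * X s q with hFdef
  have hFle : ∀ t : ℕ, ∑ q, d q * F q t ≤ C * t := by
    intro t
    have hswap : ∑ q, d q * F q t = ∑ s ∈ Finset.range t, ∑ q, d q * (a s q * X s q) := by
      simp only [hFdef, Finset.mul_sum]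
      rw [Finset.sum_comm]
    rw [hswap]
    calc ∑ s ∈ Finset.range t, ∑ q, d q * (a s q * X s q)
        ≤ ∑ _s ∈ Finset.range t, C := Finset.sum_le_sum fun s _ => hslot s
      _ = C * t := by rw [Finset.sum_const, Finset.card_range, nsmul_eq_mul]; ring
  -- limits of the partial sums
  have hFlim : ∀ q, Tendsto (fun t : ℕ => F q t / (t:ℝ)^2) atTop
      (𝓝 (η q * (η q - ηb q) / 2)) := by
    intro q
    simp only [hFdef, hadef]
    exact coordLimit (X := fun t => X t q) (Xb := fun t => Xb t q)
      (η := η q) (ηb := ηb q) (hX0 q) (hXb0 q) (B q)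
      (fun s => by simpa only [hadef] using haM s q) (hXq q) (hXbq q)
  have hsumlim : Tendsto (fun t : ℕ => ∑ q, d q * (F q t / (t:ℝ)^2)) atTop
      (𝓝 (∑ q, d q * (η q * (η q - ηb q) / 2))) :=
    tendsto_finset_sum _ fun q _ => (hFlim q).const_mul (d q)
  -- key negativity
  have hneg : ∑ q, d q * (η q * (η q - ηb q) / 2) ≤ 0 := by
    have hg : Tendsto (fun t : ℕ => C * (t:ℝ) / (t:ℝ)^2) atTop (𝓝 0) := by
      have h0 : Tendsto (fun t : ℕ => C * (t:ℝ)⁻¹) atTop (𝓝 0) := by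
        have := tendsto_inv_atTop_nhds_zero_nat.const_mul C
        simpa using this
      apply h0.congr'
      filter_upwards [eventually_gt_atTop 0] with t ht
      have : (t:ℝ) ≠ 0 := by positivity
      field_simp
    apply le_of_tendsto_of_tendsto' hsumlim hg
    intro t
    have hrw : ∑ q, d q * (F q t / (t:ℝ)^2) = (∑ q, d q * F q t) / (t:ℝ)^2 := by
      rw [Finset.sum_div]
      exact Finset.sum_congr rfl fun q _ => (mul_div_assoc _ _ _).symm
    rw [hrw]
    rcases Nat.eq_zero_or_pos t with rfl | ht
    · simp [hFdef]
    · have htR : (0:ℝ) < (t:ℝ)^2 := by positivity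
      gcongr
      exact hFle t
  -- fairness algebra
  intro q
  have hηθ : ∀ p, η p = θ p * (∑ k, η k) := fun p =>
    (div_eq_iff (ne_of_gt hsum)).1 (hfair p)
  have hηbθ : ∀ p, ηb p = θ p * (∑ k, ηb k) := fun p =>
    (div_eq_iff (ne_of_gt hsumb)).1 (hfairb p)
  have hθnn : ∀ p, 0 ≤ θ p := by
    intro p
    have := div_nonneg (hηnn p) hsum.le
    rwa [hfair p] at this
  have hθsum : (∑ p, θ p) = 1 := by
    have hc : (∑ p, θ p) * (∑ k, η k) = 1 * (∑ k, η k) := by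
      rw [one_mul, Finset.sum_mul]
      exact (Finset.sum_congr rfl fun p _ => (hηθ p).symm)
    exact mul_right_cancel₀ (ne_of_gt hsum) hc
  have hP : 0 < ∑ p, d p * θ p ^ 2 := by
    obtain ⟨p0, hp0⟩ : ∃ p, 0 < θ p := by
      by_contra h
      push_neg at h
      have : (∑ p, θ p) ≤ 0 := Finset.sum_nonpos fun p _ => h p
      rw [hθsum] at this
      linarith
    apply Finset.sum_pos'
    · intro p _
      exact mul_nonneg (hd p).le (sq_nonneg _)
    · exact ⟨p0, Finset.mem_univ p0, mul_pos (hd p0) (pow_pos hp0 2)⟩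
  have hccb : (∑ k, η k) ≤ ∑ k, ηb k := by
    have he : ∑ p, d p * (η p * (η p - ηb p) / 2)
        = (∑ k, η k) * ((∑ k, η k) - ∑ k, ηb k) / 2 * ∑ p, d p * θ p ^ 2 := by
      rw [Finset.mul_sum]
      apply Finset.sum_congr rfl
      intro p _
      rw [hηθ p, hηbθ p]
      ring
    rw [he] at hneg
    by_contra h
    push_neg at h
    have hpos := mul_pos (mul_pos hsum (sub_pos.2 h)) hP
    nlinarith [hneg, hpos]
  rw [hηθ q, hηbθ q]
  exact mul_le_mul_of_nonneg_left hccb (hθnn q)
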